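/- Let F1 and F2 be bounded operators on a Hilbert space D with F1·F2 = F2·F1 and F1·F1* − F1*·F1 = F2·F2* − F2*·F2. Define the operator E1 on the Hilbert space ℓ²(D) (square-summable D-valued sequences) by the lower-bidiagonal block matrix with F1 on the diagonal and F2* on the first subdiagonal, and E2 with F2 on the diagonal and F1* on the first subdiagonal. Then E1 and E2 commute. -/

import Mathlib

open ContinuousLinearMap

theorem stmt_19 {D : Type*} [NormedAddCommGroup D] [InnerProductSpace ℂ D] [CompleteSpace D]
    (F1 F2 : D →L[ℂ] D)
    (hcomm : F1 * F2 = F2 * F1)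
    (hself : F1 * adjoint F1 - adjoint F1 * F1 = F2 * adjoint F2 - adjoint F2 * F2)
    (E1 E2 : lp (fun _ : ℕ => D) 2 →L[ℂ] lp (fun _ : ℕ => D) 2)
    (hE1₀ : ∀ x : lp (fun _ : ℕ => D) 2, (E1 x : ∀ _ : ℕ, D) 0 = F1 ((x : ∀ _ : ℕ, D) 0))
    (hE1 : ∀ (x : lp (fun _ : ℕ => D) 2) (n : ℕ),
      (E1 x : ∀ _ : ℕ, D) (n + 1)
        = adjoint F2 ((x : ∀ _ : ℕ, D) n) + F1 ((x : ∀ _ : ℕ, D) (n + 1)))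
    (hE2₀ : ∀ x : lp (fun _ : ℕ => D) 2, (E2 x : ∀ _ : ℕ, D) 0 = F2 ((x : ∀ _ : ℕ, D) 0))
    (hE2 : ∀ (x : lp (fun _ : ℕ => D) 2) (n : ℕ),
      (E2 x : ∀ _ : ℕ, D) (n + 1)
        = adjoint F1 ((x : ∀ _ : ℕ, D) n) + F2 ((x : ∀ _ : ℕ, D) (n + 1))) :
    E1 * E2 = E2 * E1 := by
  -- pointwise versions of the hypotheses
  have hcomm' : ∀ v : D, F1 (F2 v) = F2 (F1 v) := fun v =>
    DFunLike.congr_fun hcomm v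
  have hadj : adjoint F2 * adjoint F1 = adjoint F1 * adjoint F2 := by
    rw [mul_def, mul_def, ← adjoint_comp, ← adjoint_comp, ← mul_def, ← mul_def, hcomm]
  have hadj' : ∀ v : D, adjoint F2 (adjoint F1 v) = adjoint F1 (adjoint F2 v) := fun v =>
    DFunLike.congr_fun hadj v
  have hself' : ∀ v : D,
      adjoint F2 (F2 v) + F1 (adjoint F1 v) = adjoint F1 (F1 v) + F2 (adjoint F2 v) := by
    intro v
    have := DFunLike.congr_fun hself v
    simp only [sub_apply, mul_apply_eq_comp] at this
    linear_combination (norm := module) this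
  refine ContinuousLinearMap.ext fun x => lp.ext (funext fun n => ?_)
  simp only [mul_apply_eq_comp]
  match n with
  | 0 =>
    rw [hE1₀, hE2₀, hE2₀, hE1₀, hcomm']
  | 1 =>
    rw [hE1 (E2 x) 0, hE2 (E1 x) 0, hE2₀ x, hE2 x 0, hE1₀ x, hE1 x 0]
    simp only [map_add]
    rw [hcomm' ((x : ∀ _ : ℕ, D) 1)]
    have := hself' ((x : ∀ _ : ℕ, D) 0)
    linear_combination (norm := module) this
  | (n + 2) =>
    rw [hE1 (E2 x) (n + 1), hE2 (E1 x) (n + 1), hE2 x n, hE2 x (n + 1), hE1 x n, hE1 x (n + 1)]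
    simp only [map_add]
    rw [hcomm' ((x : ∀ _ : ℕ, D) (n + 2)), hadj' ((x : ∀ _ : ℕ, D) n)]
    have := hself' ((x : ∀ _ : ℕ, D) (n + 1))
    linear_combination (norm := module) this
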